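/- Let E be a finite-dimensional inner product space, A : E →L[ℝ] E, N : E → E, F ∈ E, γ > 0, δt > 0 with (3/2)I + δt·A invertible. Then (uⁿ⁺¹, qⁿ⁺¹) defined by the explicit formulas qⁿ⁺¹ = (1/Bⁿ)(3/2 + δtγ)⁻¹[(4qⁿ - qⁿ⁻¹)/2 + δtγ + δt ⟪N(2uⁿ - uⁿ⁻¹), ((3/2)I + δtA)⁻¹((4uⁿ - uⁿ⁻¹)/2 + δt F)⟫] and uⁿ⁺¹ = ((3/2)I + δtA)⁻¹[(4uⁿ - uⁿ⁻¹)/2 - δt qⁿ⁺¹ N(2uⁿ - uⁿ⁻¹) + δt F], with Bⁿ = 1 + δt²(3/2 + δtγ)⁻¹⟪((3/2)I + δtA)⁻¹N(2uⁿ-uⁿ⁻¹), N(2uⁿ-uⁿ⁻¹)⟫, satisfy the coupled implicit scheme (3uⁿ⁺¹ - 4uⁿ + uⁿ⁻¹)/(2δt) + Auⁿ⁺¹ + qⁿ⁺¹ N(2uⁿ - uⁿ⁻¹) = F and (3qⁿ⁺¹ - 4qⁿ + qⁿ⁻¹)/(2δt) + γqⁿ⁺¹ - ⟪N(2uⁿ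 - uⁿ⁻¹), uⁿ⁺¹⟫ = γ, provided Bⁿ ≠ 0. -/

import Mathlib

theorem stmt_12 {E : Type*} [NormedAddCommGroup E] [InnerProductSpace ℝ E]
    [FiniteDimensional ℝ E]
    (A : E →L[ℝ] E) (N : E → E) (F : E) (γ δt : ℝ) (hγ : 0 < γ) (hδt : 0 < δt)
    (T B : E →L[ℝ] E)
    (hT : T = (3/2 : ℝ) • ContinuousLinearMap.id ℝ E + δt • A)
    (hTB : T ∘L B = ContinuousLinearMap.id ℝ E)
    (hBT : B ∘L T = ContinuousLinearMap.id ℝ E)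
    (un unm : E) (qn qnm : ℝ)
    (Bn : ℝ)
    (hBn : Bn = 1 + δt ^ 2 * (3/2 + δt * γ)⁻¹ *
      (inner ℝ (B (N ((2 : ℝ) • un - unm))) (N ((2 : ℝ) • un - unm)) : ℝ))
    (hBn0 : Bn ≠ 0)
    (qnew : ℝ)
    (hq : qnew = (1 / Bn) * (3/2 + δt * γ)⁻¹ *
      ((4 * qn - qnm) / 2 + δt * γ +
        δt * (inner ℝ (N ((2 : ℝ) • un - unm))
          (B ((1/2 : ℝ) • ((4 : ℝ) • un - unm) + δt • F)) : ℝ)))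
    (unew : E)
    (hu : unew = B ((1/2 : ℝ) • ((4 : ℝ) • un - unm)
      - (δt * qnew) • N ((2 : ℝ) • un - unm) + δt • F)) :
    (1 / (2 * δt)) • ((3 : ℝ) • unew - (4 : ℝ) • un + unm) + A unew
        + qnew • N ((2 : ℝ) • un - unm) = F ∧
    (3 * qnew - 4 * qn + qnm) / (2 * δt) + γ * qnew
        - (inner ℝ (N ((2 : ℝ) • un - unm)) unew : ℝ) = γ := by
  set v := N ((2 : ℝ) • un - unm) with hv
  have hδ : δt ≠ 0 := hδt.ne'
  have hc : (3/2 + δt * γ) ≠ 0 := by positivity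
  have h1 : (3/2 : ℝ) • unew + δt • A unew
      = (1/2 : ℝ) • ((4 : ℝ) • un - unm) - (δt * qnew) • v + δt • F := by
    have h := ContinuousLinearMap.ext_iff.mp hTB
      ((1/2 : ℝ) • ((4 : ℝ) • un - unm) - (δt * qnew) • v + δt • F)
    rw [hT] at h
    simp only [ContinuousLinearMap.comp_apply, ContinuousLinearMap.add_apply,
      ContinuousLinearMap.coe_smul', Pi.smul_apply, ContinuousLinearMap.coe_id',
      id_eq, ContinuousLinearMap.id_apply] at h
    rw [hu]
    exact h
  constructor
  · have h1' := congrArg (fun x => δt⁻¹ • x) h1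
    simp only [smul_add, smul_sub, smul_smul] at h1'
    rw [inv_mul_cancel₀ hδ, one_smul,
      show δt⁻¹ * (δt * qnew) = qnew by field_simp] at h1'
    linear_combination (norm := module) h1'
  · have hip : (inner ℝ v unew : ℝ)
        = inner ℝ v (B ((1/2 : ℝ) • ((4 : ℝ) • un - unm) + δt • F))
          - δt * qnew * inner ℝ (B v) v := by
      rw [hu]
      have : ((1/2 : ℝ) • ((4 : ℝ) • un - unm) - (δt * qnew) • v + δt • F)
          = ((1/2 : ℝ) • ((4 : ℝ) • un - unm) + δt • F) - (δt * qnew) • v := by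
        abel
      rw [this, map_sub, map_smul, inner_sub_right, real_inner_smul_right,
        real_inner_comm (B v) v]
    have key : qnew * (Bn * (3/2 + δt * γ))
        = (4 * qn - qnm) / 2 + δt * γ
          + δt * (inner ℝ v (B ((1/2 : ℝ) • ((4 : ℝ) • un - unm) + δt • F)) : ℝ) := by
      rw [hq]; field_simp
    rw [hBn] at key
    rw [hip]
    field_simp at key ⊢
    linear_combination key
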